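/- Let m ≥ 3, let K ≠ 2^[m] be a simplicial complex on [m], and suppose the Bier sphere Bier(K) is flag. Set n = m−1 and, for 0 ≤ j ≤ n, let f_j denote the number of faces of Bier(K) of cardinality j (so f_0 = 1). Then there exists a flag simplicial complex L on some finite set, with g_k := the number of faces of L of cardinality k satisfying g_k = 0 for k > ⌊n/2⌋, such that the polynomial identity Σ_{j=0}^{n} f_j (t−1)^{n−j} = Σ_{k=0}^{⌊n/2⌋} g_k t^k (1+t)^{n−2k} holds in ℤ[t]. (That is, the γ-vector of the flag Bier sphere Bier(K) is the f-vector of a flag simplicial complex.) -/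
import Mathlib


open Classical

def IsComplex {V : Type*} (K : Set (Finset V)) : Prop :=
  ∅ ∈ K ∧ ∀ σ ∈ K, ∀ τ ⊆ σ, τ ∈ K

def dual {m : ℕ} (K : Set (Finset (Fin m))) : Set (Finset (Fin m)) :=
  {σ | σᶜ ∉ K}

def inlEmb (m : ℕ) : Fin m ↪ (Fin m ⊕ Fin m) := Function.Embedding.inl

def inrEmb (m : ℕ) : Fin m ↪ (Fin m ⊕ Fin m) := Function.Embedding.inr

/-- The Bier sphere of `K`: faces are `I ∪ J'` with `I ∈ K`, `J ∈ K∨`, `I ∩ J = ∅`,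
where the first summand of `Fin m ⊕ Fin m` is `[m]` and the second is the primed copy `[m']`. -/
def bier {m : ℕ} (K : Set (Finset (Fin m))) : Set (Finset (Fin m ⊕ Fin m)) :=
  {τ | ∃ I ∈ K, ∃ J ∈ dual K, Disjoint I J ∧ τ = I.map (inlEmb m) ∪ J.map (inrEmb m)}

def IsMinNonFace {V : Type*} (K : Set (Finset V)) (σ : Finset V) : Prop :=
  σ ∉ K ∧ ∀ τ ⊂ σ, τ ∈ K

def IsFlag {V : Type*} (K : Set (Finset V)) : Prop :=
  ∀ σ, IsMinNonFace K σ → σ.card ≤ 2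

def IsFacet {V : Type*} (K : Set (Finset V)) (σ : Finset V) : Prop :=
  σ ∈ K ∧ ∀ τ ∈ K, σ ⊆ τ → σ = τ

open Finset Polynomial

-- helper: sum over powerset
lemma Hpow {α : Type*} [DecidableEq α] (A : Finset α) (x : Polynomial ℤ) :
    ∑ T ∈ A.powerset, x ^ T.card = (x + 1) ^ A.card := by
  induction A using Finset.induction_on with
  | empty => simp
  | @insert a s h ih =>
    
    rw [Finset.sum_powerset_insert h, ih, Finset.card_insert_of_notMem h, pow_succ]
    have : ∀ T ∈ s.powerset, x ^ (insert a T).card = x * x ^ T.card := by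
      intro T hT
      rw [Finset.card_insert_of_notMem (fun hc => h (Finset.mem_powerset.mp hT hc)), pow_succ]
      ring
    rw [Finset.sum_congr rfl this, ← Finset.mul_sum, ih]; ring

lemma Hpow' {α : Type*} [DecidableEq α] (A : Finset α) (x : Polynomial ℤ) :
    ∑ T ∈ A.powerset, x ^ (A.card - T.card) = (x + 1) ^ A.card := by
  rw [← Hpow A x]
  apply Finset.sum_nbij' (fun T => A \ T) (fun T => A \ T)
  · intro T hT; exact Finset.mem_powerset.mpr (Finset.sdiff_subset)
  · intro T hT; exact Finset.mem_powerset.mpr (Finset.sdiff_subset)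
  · intro T hT; exact Finset.sdiff_sdiff_eq_self (Finset.mem_powerset.mp hT)
  · intro T hT; exact Finset.sdiff_sdiff_eq_self (Finset.mem_powerset.mp hT)
  · intro T hT; rw [Finset.card_sdiff_of_subset (Finset.mem_powerset.mp hT)]

lemma Hshift {α : Type*} [DecidableEq α] (A : Finset α) (e : ℕ) :
    ∑ T ∈ A.powerset, (X : Polynomial ℤ) ^ (e + (A.card - T.card)) = X ^ e * (X + 1) ^ A.card := by
  simp_rw [pow_add, ← Finset.mul_sum, Hpow']

lemma Hshift' {α : Type*} [DecidableEq α] (A : Finset α) (e : ℕ) :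
    ∑ T ∈ A.powerset, (X : Polynomial ℤ) ^ (e + T.card) = X ^ e * (X + 1) ^ A.card := by
  simp_rw [pow_add, ← Finset.mul_sum, Hpow]

section Counting
variable {m : ℕ} {K : Set (Finset (Fin m))}

lemma map_disj (I J : Finset (Fin m)) :
    Disjoint (I.map (inlEmb m)) (J.map (inrEmb m)) := by
  rw [Finset.disjoint_left]
  rintro x hx hy
  simp only [inlEmb, inrEmb, Finset.mem_map] at hx hy
  obtain ⟨a, _, rfl⟩ := hx
  obtain ⟨b, _, hb⟩ := hy
  simp at hb

lemma lp_eq (I J : Finset (Fin m)) :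
    Finset.univ.filter (fun x => Sum.inl x ∈ I.map (inlEmb m) ∪ J.map (inrEmb m)) = I := by
  ext x; simp [inlEmb, inrEmb]

lemma rp_eq (I J : Finset (Fin m)) :
    Finset.univ.filter (fun x => Sum.inr x ∈ I.map (inlEmb m) ∪ J.map (inrEmb m)) = J := by
  ext x; simp [inlEmb, inrEmb]

lemma recompose (τ : Finset (Fin m ⊕ Fin m)) :
    (Finset.univ.filter (fun x => Sum.inl x ∈ τ)).map (inlEmb m)
      ∪ (Finset.univ.filter (fun x => Sum.inr x ∈ τ)).map (inrEmb m) = τ := by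
  ext x; cases x <;> simp [inlEmb, inrEmb]

lemma card_bier_face (I J : Finset (Fin m)) :
    (I.map (inlEmb m) ∪ J.map (inrEmb m)).card = I.card + J.card := by
  rw [Finset.card_union_of_disjoint (map_disj I J), Finset.card_map, Finset.card_map]

lemma bier_card_lt (hK : IsComplex K) {τ : Finset (Fin m ⊕ Fin m)} (h : τ ∈ bier K) :
    τ.card < m := by
  obtain ⟨I, hI, J, hJ, hd, rfl⟩ := h
  rw [card_bier_face]
  have hle : I.card + J.card ≤ m := by
    rw [← Finset.card_union_of_disjoint hd]
    simpa using Finset.card_le_univ (I ∪ J)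
  rcases lt_or_eq_of_le hle with h | h
  · exact h
  · exfalso
    have huniv : I ∪ J = Finset.univ := by
      apply Finset.eq_univ_of_card
      rw [Finset.card_union_of_disjoint hd, h, Fintype.card_fin]
    have : J = Iᶜ := by
      ext x
      constructor
      · intro hx
        simp only [Finset.mem_compl]
        exact fun hxI => (Finset.disjoint_left.mp hd) hxI hx
      · intro hx
        have : x ∈ I ∪ J := huniv ▸ Finset.mem_univ x
        simp only [Finset.mem_compl] at hx
        rcases Finset.mem_union.mp this with h' | h'
        · exact absurd h' hx
        · exact h'
    rw [this] at hJ
    exact hJ (by simpa using hI)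

lemma sum_faces (hK : IsComplex K) :
    (∑ j ∈ Finset.range m,
        ((Finset.univ.filter
          (fun σ : Finset (Fin m ⊕ Fin m) => σ ∈ bier K ∧ σ.card = j)).card : Polynomial ℤ)
          * (X - 1) ^ (m - 1 - j)) * (X - 1)
    = ∑ τ ∈ Finset.univ.filter (· ∈ bier K), (X - 1) ^ (m - τ.card) := by
  rw [Finset.sum_mul]
  have h1 : ∀ j ∈ Finset.range m,
      ((Finset.univ.filter
          (fun σ : Finset (Fin m ⊕ Fin m) => σ ∈ bier K ∧ σ.card = j)).card : Polynomial ℤ)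
          * (X - 1) ^ (m - 1 - j) * (X - 1)
      = ∑ τ ∈ (Finset.univ.filter (· ∈ bier K)).filter (fun τ => τ.card = j),
          (X - 1) ^ (m - τ.card) := by
    intro j hj
    rw [Finset.filter_filter]
    rw [Finset.sum_congr rfl (fun τ hτ => by
      rw [(Finset.mem_filter.mp hτ).2.2])]
    rw [Finset.sum_const, nsmul_eq_mul]
    rw [mul_assoc, ← pow_succ]
    have hj' := Finset.mem_range.mp hj
    congr 2
    omega
  rw [Finset.sum_congr rfl h1]
  exact Finset.sum_fiberwise_of_maps_to
    (fun τ hτ => Finset.mem_range.mpr (bier_card_lt hK (Finset.mem_filter.mp hτ).2)) _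

lemma sum_pairs (hK : IsComplex K) :
    ∑ τ ∈ Finset.univ.filter (· ∈ bier K), ((X : Polynomial ℤ) - 1) ^ (m - τ.card)
    = ∑ p ∈ (Finset.univ ×ˢ Finset.univ).filter
        (fun p : Finset (Fin m) × Finset (Fin m) => p.1 ∈ K ∧ p.1 ⊆ p.2 ∧ p.2 ∉ K),
        (X - 1) ^ (p.2.card - p.1.card) := by
  symm
  apply Finset.sum_nbij' (i := fun p => p.1.map (inlEmb m) ∪ p.2ᶜ.map (inrEmb m))
    (j := fun τ => (Finset.univ.filter (fun x => Sum.inl x ∈ τ),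
      (Finset.univ.filter (fun x => Sum.inr x ∈ τ))ᶜ))
  · rintro ⟨I, S⟩ hp
    simp only [Finset.mem_filter, Finset.mem_product] at hp
    obtain ⟨-, hI, hsub, hS⟩ := hp
    refine Finset.mem_filter.mpr ⟨Finset.mem_univ _, I, hI, Sᶜ, ?_, ?_, rfl⟩
    · show Sᶜᶜ ∉ K; rwa [compl_compl]
    · rw [Finset.disjoint_left]
      intro x hxI hxS
      exact (Finset.mem_compl.mp hxS) (hsub hxI)
  · intro τ hτ
    obtain ⟨I, hI, J, hJ, hd, rfl⟩ := (Finset.mem_filter.mp hτ).2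
    simp only [Finset.mem_filter, Finset.mem_product]
    refine ⟨⟨Finset.mem_univ _, Finset.mem_univ _⟩, ?_, ?_, ?_⟩
    · rw [lp_eq]; exact hI
    · rw [lp_eq, rp_eq]
      intro x hx
      simp only [Finset.mem_compl]
      exact fun hxJ => Finset.disjoint_left.mp hd hx hxJ
    · rw [rp_eq]; exact hJ
  · rintro ⟨I, S⟩ hp
    simp only [lp_eq, rp_eq, compl_compl]
  · intro τ hτ
    simp only [compl_compl, recompose]
  · rintro ⟨I, S⟩ hp
    simp only [Finset.mem_filter, Finset.mem_product] at hp
    obtain ⟨-, hI, hsub, hS⟩ := hp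
    dsimp only
    rw [card_bier_face, Finset.card_compl, Fintype.card_fin]
    have h1 : S.card ≤ m := by simpa using Finset.card_le_univ S
    have h2 : I.card ≤ S.card := Finset.card_le_card hsub
    congr 1
    omega

lemma sum_Pall (hK : IsComplex K) :
    ∑ p ∈ (Finset.univ ×ˢ Finset.univ).filter
        (fun p : Finset (Fin m) × Finset (Fin m) => p.1 ∈ K ∧ p.1 ⊆ p.2),
        ((X : Polynomial ℤ) - 1) ^ (p.2.card - p.1.card)
    = ∑ I ∈ Finset.univ.filter (· ∈ K), (X : Polynomial ℤ) ^ (m - I.card) := by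
  rw [Finset.sum_filter, Finset.sum_product, Finset.sum_filter]
  apply Finset.sum_congr rfl
  intro I _
  by_cases hI : I ∈ K
  · simp only [hI, true_and, if_true]
    rw [← Finset.sum_filter]
    have : ∑ S ∈ Finset.univ.filter (fun S => I ⊆ S), ((X : Polynomial ℤ) - 1) ^ (S.card - I.card)
        = ∑ T ∈ Iᶜ.powerset, ((X : Polynomial ℤ) - 1) ^ T.card := by
      apply Finset.sum_nbij' (fun S => S \ I) (fun T => I ∪ T)
      · intro S hS
        refine Finset.mem_powerset.mpr (fun x hx => ?_)
        simp only [Finset.mem_sdiff] at hx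
        exact Finset.mem_compl.mpr hx.2
      · intro T hT
        refine Finset.mem_filter.mpr ⟨Finset.mem_univ _, Finset.subset_union_left⟩
      · intro S hS
        exact Finset.union_sdiff_of_subset (Finset.mem_filter.mp hS).2
      · intro T hT
        apply Finset.union_sdiff_cancel_left
        rw [Finset.disjoint_left]
        intro x hxI hxT
        exact Finset.mem_compl.mp (Finset.mem_powerset.mp hT hxT) hxI
      · intro S hS
        rw [Finset.card_sdiff_of_subset (Finset.mem_filter.mp hS).2]
    rw [this, Hpow, sub_add_cancel, Finset.card_compl, Fintype.card_fin]
  · simp [hI]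

lemma sum_PK (hK : IsComplex K) :
    ∑ p ∈ (Finset.univ ×ˢ Finset.univ).filter
        (fun p : Finset (Fin m) × Finset (Fin m) => p.1 ⊆ p.2 ∧ p.2 ∈ K),
        ((X : Polynomial ℤ) - 1) ^ (p.2.card - p.1.card)
    = ∑ S ∈ Finset.univ.filter (· ∈ K), (X : Polynomial ℤ) ^ S.card := by
  rw [Finset.sum_filter, Finset.sum_product_right, Finset.sum_filter]
  apply Finset.sum_congr rfl
  intro S _
  by_cases hS : S ∈ K
  · simp only [hS, and_true, if_true]
    rw [← Finset.sum_filter]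
    have huf : Finset.univ.filter (fun I : Finset (Fin m) => I ⊆ S) = S.powerset := by
      ext I; simp [Finset.mem_powerset]
    rw [huf, Hpow', sub_add_cancel]
  · simp [hS]

lemma counting (hK : IsComplex K) :
    (∑ j ∈ Finset.range m,
        ((Finset.univ.filter
          (fun σ : Finset (Fin m ⊕ Fin m) => σ ∈ bier K ∧ σ.card = j)).card : Polynomial ℤ)
          * (X - 1) ^ (m - 1 - j)) * (X - 1)
    = ∑ I ∈ Finset.univ.filter (· ∈ K),
        ((X : Polynomial ℤ) ^ (m - I.card) - X ^ I.card) := by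
  rw [sum_faces hK, sum_pairs hK]
  have hsplit := Finset.sum_filter_add_sum_filter_not
    ((Finset.univ ×ˢ Finset.univ).filter
      (fun p : Finset (Fin m) × Finset (Fin m) => p.1 ∈ K ∧ p.1 ⊆ p.2))
    (fun p => p.2 ∈ K)
    (fun p => ((X : Polynomial ℤ) - 1) ^ (p.2.card - p.1.card))
  have e1 : ((Finset.univ ×ˢ Finset.univ).filter
      (fun p : Finset (Fin m) × Finset (Fin m) => p.1 ∈ K ∧ p.1 ⊆ p.2)).filter
        (fun p => p.2 ∈ K)
      = (Finset.univ ×ˢ Finset.univ).filter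
        (fun p : Finset (Fin m) × Finset (Fin m) => p.1 ⊆ p.2 ∧ p.2 ∈ K) := by
    rw [Finset.filter_filter]
    apply Finset.filter_congr
    intro p _
    constructor
    · rintro ⟨⟨h1, h2⟩, h3⟩; exact ⟨h2, h3⟩
    · rintro ⟨h2, h3⟩; exact ⟨⟨hK.2 _ h3 _ h2, h2⟩, h3⟩
  have e2 : ((Finset.univ ×ˢ Finset.univ).filter
      (fun p : Finset (Fin m) × Finset (Fin m) => p.1 ∈ K ∧ p.1 ⊆ p.2)).filter
        (fun p => ¬ p.2 ∈ K)
      = (Finset.univ ×ˢ Finset.univ).filter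
        (fun p : Finset (Fin m) × Finset (Fin m) => p.1 ∈ K ∧ p.1 ⊆ p.2 ∧ p.2 ∉ K) := by
    rw [Finset.filter_filter]
    apply Finset.filter_congr
    intro p _
    tauto
  rw [e1, e2] at hsplit
  have : ∑ p ∈ (Finset.univ ×ˢ Finset.univ).filter
      (fun p : Finset (Fin m) × Finset (Fin m) => p.1 ∈ K ∧ p.1 ⊆ p.2 ∧ p.2 ∉ K),
      ((X : Polynomial ℤ) - 1) ^ (p.2.card - p.1.card)
      = ∑ I ∈ Finset.univ.filter (· ∈ K), (X : Polynomial ℤ) ^ (m - I.card)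
        - ∑ S ∈ Finset.univ.filter (· ∈ K), (X : Polynomial ℤ) ^ S.card := by
    rw [← sum_Pall hK, ← sum_PK hK]
    linear_combination hsplit
  rw [this, Finset.sum_sub_distrib]

end Counting

section Structure
variable {m : ℕ} {K : Set (Finset (Fin m))}

lemma univ_not_mem (hK : IsComplex K) (hKne : K ≠ Set.univ) :
    (Finset.univ : Finset (Fin m)) ∉ K := by
  intro h
  apply hKne
  ext I
  simp only [Set.mem_univ, iff_true]
  exact hK.2 _ h I (Finset.subset_univ I)

lemma empty_mem_dual (hK : IsComplex K) (hKne : K ≠ Set.univ) :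
    (∅ : Finset (Fin m)) ∈ dual K := by
  show ∅ᶜ ∉ K
  rw [Finset.compl_empty]
  exact univ_not_mem hK hKne

lemma exists_min_nonface (hK : IsComplex K) (σ : Finset (Fin m)) (hσ : σ ∉ K) :
    ∃ τ ⊆ σ, IsMinNonFace K τ := by
  induction σ using Finset.strongInduction with
  | _ σ ih =>
    by_cases h : ∀ τ ⊂ σ, τ ∈ K
    · exact ⟨σ, Finset.Subset.refl σ, hσ, h⟩
    · push_neg at h
      obtain ⟨τ, hsub, hτ⟩ := h
      obtain ⟨ρ, hρsub, hρ⟩ := ih τ hsub hτ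
      exact ⟨ρ, hρsub.trans hsub.subset, hρ⟩

lemma K_flag (hK : IsComplex K) (hKne : K ≠ Set.univ) (hflag : IsFlag (bier K)) :
    IsFlag K := by
  intro σ hσ
  have h1 : σ.map (inlEmb m) ∉ bier K := by
    rintro ⟨I, hI, J, hJ, hd, heq⟩
    have hJe : J = ∅ := by
      rw [Finset.eq_empty_iff_forall_notMem]
      intro y hy
      have hmem : Sum.inr y ∈ σ.map (inlEmb m) :=
        heq ▸ (Finset.mem_union_right _ (Finset.mem_map_of_mem _ hy))
      simp [inlEmb] at hmem
    rw [hJe] at heq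
    simp only [Finset.map_empty, Finset.union_empty] at heq
    have : σ = I := Finset.map_injective _ heq
    exact hσ.1 (this ▸ hI)
  have h2 : ∀ τ ⊂ σ.map (inlEmb m), τ ∈ bier K := by
    intro τ hτ
    obtain ⟨u, husub, rfl⟩ := Finset.subset_map_iff.mp hτ.subset
    have hune : u ≠ σ := by
      rintro rfl
      exact hτ.ne rfl
    have hu : u ⊂ σ := Finset.ssubset_iff_subset_ne.mpr ⟨husub, hune⟩
    exact ⟨u, hσ.2 u hu, ∅, empty_mem_dual hK hKne, Finset.disjoint_empty_right u, by simp⟩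
  have := hflag (σ.map (inlEmb m)) ⟨h1, h2⟩
  rwa [Finset.card_map] at this

lemma facet_exists (hK : IsComplex K) {I : Finset (Fin m)} (hI : I ∈ K) :
    ∃ S, IsFacet K S ∧ I ⊆ S := by
  have hne : (Finset.univ.filter (fun S => S ∈ K ∧ I ⊆ S)).Nonempty :=
    ⟨I, Finset.mem_filter.mpr ⟨Finset.mem_univ _, hI, Finset.Subset.refl I⟩⟩
  obtain ⟨S, hS, hmax⟩ := Finset.exists_max_image _ Finset.card hne
  rw [Finset.mem_filter] at hS
  refine ⟨S, ⟨hS.2.1, ?_⟩, hS.2.2⟩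
  intro τ hτ hsub
  have hτF : τ ∈ Finset.univ.filter (fun S => S ∈ K ∧ I ⊆ S) :=
    Finset.mem_filter.mpr ⟨Finset.mem_univ _, hτ, hS.2.2.trans hsub⟩
  exact Finset.eq_of_subset_of_card_le hsub (hmax τ hτF)

lemma facet_compl_card (hK : IsComplex K) (hflag : IsFlag (bier K))
    {S : Finset (Fin m)} (hS : IsFacet K S) : Sᶜ.card ≤ 2 := by
  have h1 : Sᶜ.map (inrEmb m) ∉ bier K := by
    rintro ⟨I, hI, J, hJ, hd, heq⟩
    have hIe : I = ∅ := by
      rw [Finset.eq_empty_iff_forall_notMem]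
      intro y hy
      have hmem : Sum.inl y ∈ Sᶜ.map (inrEmb m) :=
        heq ▸ (Finset.mem_union_left _ (Finset.mem_map_of_mem _ hy))
      simp [inrEmb] at hmem
    rw [hIe] at heq
    simp only [Finset.map_empty, Finset.empty_union] at heq
    have hJS : Sᶜ = J := Finset.map_injective _ heq
    rw [← hJS] at hJ
    exact hJ (by simpa using hS.1)
  have h2 : ∀ τ ⊂ Sᶜ.map (inrEmb m), τ ∈ bier K := by
    intro τ hτ
    obtain ⟨u, husub, rfl⟩ := Finset.subset_map_iff.mp hτ.subset
    have hune : u ≠ Sᶜ := by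
      rintro rfl
      exact hτ.ne rfl
    have huD : u ∈ dual K := by
      show uᶜ ∉ K
      intro hc
      have hsub : S ⊆ uᶜ := by
        intro x hx
        rw [Finset.mem_compl]
        intro hxu
        exact Finset.mem_compl.mp (husub hxu) hx
      have := hS.2 uᶜ hc hsub
      apply hune
      rw [this, compl_compl]
    refine ⟨∅, hK.1, u, huD, Finset.disjoint_empty_left u, by simp⟩
  have := hflag (Sᶜ.map (inrEmb m)) ⟨h1, h2⟩
  rwa [Finset.card_map] at this

def NPadj (K : Set (Finset (Fin m))) (x y : Fin m) : Prop :=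
  x ≠ y ∧ ({x} : Finset (Fin m)) ∈ K ∧ ({y} : Finset (Fin m)) ∈ K ∧
    ({x, y} : Finset (Fin m)) ∉ K

lemma NPadj.symm {x y : Fin m} (h : NPadj K x y) : NPadj K y x := by
  obtain ⟨h1, h2, h3, h4⟩ := h
  exact ⟨h1.symm, h3, h2, by rwa [Finset.pair_comm]⟩

lemma mem_iff_clique (hK : IsComplex K) (hKne : K ≠ Set.univ) (hflag : IsFlag (bier K))
    (I : Finset (Fin m)) :
    I ∈ K ↔ ((∀ x ∈ I, ({x} : Finset (Fin m)) ∈ K) ∧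
      (∀ x ∈ I, ∀ y ∈ I, x ≠ y → ({x, y} : Finset (Fin m)) ∈ K)) := by
  constructor
  · intro hI
    refine ⟨fun x hx => hK.2 I hI {x} (by simpa using hx),
      fun x hx y hy hxy => hK.2 I hI {x, y} ?_⟩
    rw [Finset.insert_subset_iff, Finset.singleton_subset_iff]
    exact ⟨hx, hy⟩
  · rintro ⟨hs, hp⟩
    by_contra hI
    obtain ⟨τ, hτsub, hτ⟩ := exists_min_nonface hK I hI
    have hcard := K_flag hK hKne hflag τ hτ
    have h012 : τ.card = 0 ∨ τ.card = 1 ∨ τ.card = 2 := by omega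
    rcases h012 with h | h | h
    · rw [Finset.card_eq_zero] at h
      exact hτ.1 (h ▸ hK.1)
    · obtain ⟨x, rfl⟩ := Finset.card_eq_one.mp h
      exact hτ.1 (hs x (hτsub (Finset.mem_singleton_self x)))
    · obtain ⟨x, y, hxy, rfl⟩ := Finset.card_eq_two.mp h
      have hx : x ∈ I := hτsub (by simp)
      have hy : y ∈ I := hτsub (by simp)
      exact hτ.1 (hp x hx y hy hxy)

lemma bad_not_mem (hK : IsComplex K) {S : Finset (Fin m)} (hS : S ∈ K) {p : Fin m}
    (hp : ({p} : Finset (Fin m)) ∉ K) : p ∉ S :=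
  fun h => hp (hK.2 S hS {p} (by simpa using h))

lemma adj_notMem (hK : IsComplex K) {S : Finset (Fin m)} (hS : S ∈ K) {x y : Fin m}
    (ha : NPadj K x y) (hx : x ∈ S) : y ∉ S := by
  intro hy
  apply ha.2.2.2
  apply hK.2 S hS
  rw [Finset.insert_subset_iff, Finset.singleton_subset_iff]
  exact ⟨hx, hy⟩

lemma adj_not_both (hK : IsComplex K) {S : Finset (Fin m)} (hS : S ∈ K) {x y : Fin m}
    (ha : NPadj K x y) : x ∉ S ∨ y ∉ S := by
  by_cases hx : x ∈ S
  · exact Or.inr (adj_notMem hK hS ha hx)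
  · exact Or.inl hx

lemma facet_three (hK : IsComplex K) (hflag : IsFlag (bier K)) {S : Finset (Fin m)}
    (hS : IsFacet K S) {u v w : Fin m} (hu : u ∉ S) (hv : v ∉ S) (hw : w ∉ S)
    (huv : u ≠ v) (huw : u ≠ w) (hvw : v ≠ w) : False := by
  have hsub : ({u, v, w} : Finset (Fin m)) ⊆ Sᶜ := by
    intro x hx
    simp only [Finset.mem_insert, Finset.mem_singleton] at hx
    rcases hx with rfl | rfl | rfl <;> simpa [Finset.mem_compl]
  have hcard : ({u, v, w} : Finset (Fin m)).card = 3 := by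
    rw [Finset.card_insert_of_notMem (by simp [huv, huw]),
      Finset.card_insert_of_notMem (by simp [hvw]), Finset.card_singleton]
  have := (hcard ▸ Finset.card_le_card hsub).trans (facet_compl_card hK hflag hS)
  omega

lemma iusd (I D : Finset (Fin m)) : (I ∩ D) ∪ (I \ D) = I := by
  rw [Finset.union_comm]; exact Finset.sdiff_union_inter I D

lemma master (D : Finset (Fin m)) (Q : Finset (Fin m) → Prop)
    (hQ : ∀ I : Finset (Fin m), I ∈ K ↔ Q (I ∩ D)) :
    ∑ I ∈ Finset.univ.filter (· ∈ K), ((X : Polynomial ℤ) ^ (m - I.card) - X ^ I.card)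
    = (X + 1) ^ (m - D.card) *
      ∑ W ∈ D.powerset,
        (if Q W then ((X : Polynomial ℤ) ^ (D.card - W.card) - X ^ W.card) else 0) := by
  rw [Finset.sum_filter]
  have hre : ∑ I : Finset (Fin m), (if I ∈ K then ((X : Polynomial ℤ) ^ (m - I.card) - X ^ I.card) else 0)
      = ∑ p ∈ D.powerset ×ˢ Dᶜ.powerset,
          (if p.1 ∪ p.2 ∈ K then ((X : Polynomial ℤ) ^ (m - (p.1 ∪ p.2).card) - X ^ (p.1 ∪ p.2).card) else 0) := by
    apply Finset.sum_nbij' (i := fun I => (I ∩ D, I \ D)) (j := fun p => p.1 ∪ p.2)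
    · intro I _
      rw [Finset.mem_product]
      constructor
      · exact Finset.mem_powerset.mpr Finset.inter_subset_right
      · refine Finset.mem_powerset.mpr (fun a ha => ?_)
        rw [Finset.mem_compl]
        exact (Finset.mem_sdiff.mp ha).2
    · intro p _
      exact Finset.mem_univ _
    · intro I _
      exact iusd I D
    · rintro ⟨W, T⟩ hp
      rw [Finset.mem_product, Finset.mem_powerset, Finset.mem_powerset] at hp
      obtain ⟨hW, hT⟩ := hp
      have hTD : ∀ a ∈ T, a ∉ D := fun a ha => Finset.mem_compl.mp (hT ha)
      have e1 : (W ∪ T) ∩ D = W := by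
        ext a
        simp only [Finset.mem_inter, Finset.mem_union]
        constructor
        · rintro ⟨h | h, hD⟩
          · exact h
          · exact absurd hD (hTD a h)
        · intro h
          exact ⟨Or.inl h, hW h⟩
      have e2 : (W ∪ T) \ D = T := by
        ext a
        simp only [Finset.mem_sdiff, Finset.mem_union]
        constructor
        · rintro ⟨h | h, hD⟩
          · exact absurd (hW h) hD
          · exact h
        · intro h
          exact ⟨Or.inr h, hTD a h⟩
      simp only [e1, e2]
    · intro I _
      dsimp only
      rw [iusd]
  rw [hre, Finset.sum_product]
  have hinner : ∀ W ∈ D.powerset,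
      (∑ T ∈ Dᶜ.powerset,
        (if W ∪ T ∈ K then ((X : Polynomial ℤ) ^ (m - (W ∪ T).card) - X ^ (W ∪ T).card) else 0))
      = (if Q W then ((X : Polynomial ℤ) ^ (D.card - W.card) - X ^ W.card) else 0)
          * (X + 1) ^ (m - D.card) := by
    intro W hW
    have hWD := Finset.mem_powerset.mp hW
    have hcsum : D.card + Dᶜ.card = m := by
      rw [Finset.card_add_card_compl, Fintype.card_fin]
    have hstep : ∀ T ∈ Dᶜ.powerset,
        (if W ∪ T ∈ K then ((X : Polynomial ℤ) ^ (m - (W ∪ T).card) - X ^ (W ∪ T).card) else 0)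
        = (if Q W then ((X : Polynomial ℤ) ^ ((D.card - W.card) + (Dᶜ.card - T.card))
            - X ^ (W.card + T.card)) else 0) := by
      intro T hT
      have hTc := Finset.mem_powerset.mp hT
      have hdisj : Disjoint W T := by
        rw [Finset.disjoint_left]
        intro a haW haT
        exact Finset.mem_compl.mp (hTc haT) (hWD haW)
      have hcard : (W ∪ T).card = W.card + T.card := Finset.card_union_of_disjoint hdisj
      have hcond : (W ∪ T ∈ K) = Q W := by
        have e1 : (W ∪ T) ∩ D = W := by
          ext a
          simp only [Finset.mem_inter, Finset.mem_union]
          constructor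
          · rintro ⟨h | h, hD⟩
            · exact h
            · exact absurd hD (Finset.mem_compl.mp (hTc h))
          · intro h
            exact ⟨Or.inl h, hWD h⟩
        rw [hQ (W ∪ T), e1]
      have h1 : W.card ≤ D.card := Finset.card_le_card hWD
      have h2 : T.card ≤ Dᶜ.card := Finset.card_le_card hTc
      rw [hcond, hcard,
        show m - (W.card + T.card) = (D.card - W.card) + (Dᶜ.card - T.card) by omega]
    rw [Finset.sum_congr rfl hstep]
    by_cases hQW : Q W
    · simp only [hQW, if_true]
      rw [Finset.sum_sub_distrib, Hshift, Hshift']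
      rw [show Dᶜ.card = m - D.card by omega]
      ring
    · simp [hQW]
  rw [Finset.sum_congr rfl hinner, ← Finset.sum_mul]
  ring
section PSum
variable {α : Type*} [DecidableEq α] {M : Type*} [AddCommMonoid M]

lemma psum1 (a : α) (f : Finset α → M) :
    ∑ W ∈ ({a} : Finset α).powerset, f W = f ∅ + f {a} := by
  rw [show ({a} : Finset α) = insert a ∅ from rfl,
    Finset.sum_powerset_insert (by simp), Finset.powerset_empty,
    Finset.sum_singleton, Finset.sum_singleton]

lemma psum2 {a b : α} (hab : a ≠ b) (f : Finset α → M) :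
    ∑ W ∈ ({a, b} : Finset α).powerset, f W
    = f ∅ + f {b} + (f {a} + f {a, b}) := by
  rw [show ({a, b} : Finset α) = insert a {b} from rfl,
    Finset.sum_powerset_insert (by simp [hab]), psum1, psum1]
  rfl

lemma psum3 {a b c : α} (hab : a ≠ b) (hac : a ≠ c) (hbc : b ≠ c) (f : Finset α → M) :
    ∑ W ∈ ({a, b, c} : Finset α).powerset, f W
    = f ∅ + f {c} + (f {b} + f {b, c}) + (f {a} + f {a, c} + (f {a, b} + f {a, b, c})) := by
  rw [show ({a, b, c} : Finset α) = insert a {b, c} from rfl,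
    Finset.sum_powerset_insert (by simp [hab, hac]), psum2 hbc, psum2 hbc]
  rfl

lemma psum4 {a b c d : α} (hab : a ≠ b) (hac : a ≠ c) (had : a ≠ d)
    (hbc : b ≠ c) (hbd : b ≠ d) (hcd : c ≠ d) (f : Finset α → M) :
    ∑ W ∈ ({a, b, c, d} : Finset α).powerset, f W
    = f ∅ + f {d} + (f {c} + f {c, d}) + (f {b} + f {b, d} + (f {b, c} + f {b, c, d}))
      + (f {a} + f {a, d} + (f {a, c} + f {a, c, d})
        + (f {a, b} + f {a, b, d} + (f {a, b, c} + f {a, b, c, d}))) := by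
  rw [show ({a, b, c, d} : Finset α) = insert a {b, c, d} from rfl,
    Finset.sum_powerset_insert (by simp [hab, hac, had]), psum3 hbc hbd hcd, psum3 hbc hbd hcd]
  rfl

end PSum

lemma shape_K2 (hm : 3 ≤ m) {a b : Fin m} (hab : a ≠ b)
    (hchar : ∀ I : Finset (Fin m), I ∈ K ↔ ¬({a, b} : Finset (Fin m)) ⊆ I) :
    ∑ I ∈ Finset.univ.filter (· ∈ K), ((X : Polynomial ℤ) ^ (m - I.card) - X ^ I.card)
    = (X - 1) * ((1 + X) ^ (m - 1) + 0 * X * (1 + X) ^ (m - 3)) := by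
  have hQ : ∀ I : Finset (Fin m), I ∈ K ↔
      (fun W => ¬({a, b} : Finset (Fin m)) ⊆ W) (I ∩ {a, b}) := by
    intro I
    rw [hchar I]
    simp only [Finset.subset_inter_iff, Finset.Subset.refl, and_true]
  rw [master {a, b} (fun W => ¬({a, b} : Finset (Fin m)) ⊆ W) hQ, psum2 hab]
  norm_num [Finset.insert_subset_iff, Finset.card_insert_of_notMem, hab, hab.symm, -Finset.subset_singleton_iff]
  obtain ⟨r, rfl⟩ : ∃ r, m = r + 3 := ⟨m - 3, by omega⟩
  rw [show r + 3 - 2 = r + 1 by omega, show r + 3 - 1 = r + 2 by omega]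
  ring

lemma card4_le {a b c d : Fin m} (hab : a ≠ b) (hac : a ≠ c) (had : a ≠ d)
    (hbc : b ≠ c) (hbd : b ≠ d) (hcd : c ≠ d) : 4 ≤ m := by
  have h := Finset.card_le_univ ({a, b, c, d} : Finset (Fin m))
  rw [Finset.card_insert_of_notMem (by simp [hab, hac, had]),
    Finset.card_insert_of_notMem (by simp [hbc, hbd]),
    Finset.card_insert_of_notMem (by simp [hcd]), Finset.card_singleton] at h
  simpa using h

lemma shape_A (hm : 3 ≤ m) {p q : Fin m} (hpq : p ≠ q)
    (hchar : ∀ I : Finset (Fin m), I ∈ K ↔ (p ∉ I ∧ q ∉ I)) :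
    ∑ I ∈ Finset.univ.filter (· ∈ K), ((X : Polynomial ℤ) ^ (m - I.card) - X ^ I.card)
    = (X - 1) * ((1 + X) ^ (m - 1) + 0 * X * (1 + X) ^ (m - 3)) := by
  have hQ : ∀ I : Finset (Fin m), I ∈ K ↔
      (fun W => p ∉ W ∧ q ∉ W) (I ∩ {p, q}) := by
    intro I
    rw [hchar I]
    simp [Finset.mem_inter]
  rw [master {p, q} (fun W => p ∉ W ∧ q ∉ W) hQ, psum2 hpq]
  norm_num [Finset.card_insert_of_notMem, hpq, hpq.symm]
  obtain ⟨r, rfl⟩ : ∃ r, m = r + 3 := ⟨m - 3, by omega⟩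
  rw [show r + 3 - 2 = r + 1 by omega, show r + 3 - 1 = r + 2 by omega]
  ring

lemma shape_B0 (hm : 3 ≤ m) (p : Fin m)
    (hchar : ∀ I : Finset (Fin m), I ∈ K ↔ p ∉ I) :
    ∑ I ∈ Finset.univ.filter (· ∈ K), ((X : Polynomial ℤ) ^ (m - I.card) - X ^ I.card)
    = (X - 1) * ((1 + X) ^ (m - 1) + 0 * X * (1 + X) ^ (m - 3)) := by
  have hQ : ∀ I : Finset (Fin m), I ∈ K ↔ (fun W => p ∉ W) (I ∩ {p}) := by
    intro I
    rw [hchar I]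
    simp [Finset.mem_inter]
  rw [master {p} (fun W => p ∉ W) hQ, psum1]
  norm_num
  ring

lemma shape_B1 (hm : 3 ≤ m) {p a b : Fin m} (hpa : p ≠ a) (hpb : p ≠ b) (hab : a ≠ b)
    (hchar : ∀ I : Finset (Fin m), I ∈ K ↔ (p ∉ I ∧ ¬({a, b} : Finset (Fin m)) ⊆ I)) :
    ∑ I ∈ Finset.univ.filter (· ∈ K), ((X : Polynomial ℤ) ^ (m - I.card) - X ^ I.card)
    = (X - 1) * ((1 + X) ^ (m - 1) + 1 * X * (1 + X) ^ (m - 3)) := by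
  have hQ : ∀ I : Finset (Fin m), I ∈ K ↔
      (fun W => p ∉ W ∧ ¬({a, b} : Finset (Fin m)) ⊆ W) (I ∩ {p, a, b}) := by
    intro I
    rw [hchar I]
    simp [Finset.mem_inter, Finset.subset_inter_iff, Finset.insert_subset_iff]
  rw [master {p, a, b} (fun W => p ∉ W ∧ ¬({a, b} : Finset (Fin m)) ⊆ W) hQ,
    psum3 hpa hpb hab]
  norm_num [Finset.insert_subset_iff, Finset.card_insert_of_notMem,
    hpa, hpa.symm, hpb, hpb.symm, hab, hab.symm, -Finset.subset_singleton_iff]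
  obtain ⟨r, rfl⟩ : ∃ r, m = r + 3 := ⟨m - 3, by omega⟩
  rw [show r + 3 - 3 = r by omega, show r + 3 - 1 = r + 2 by omega]
  ring

lemma shape_P3 (hm : 3 ≤ m) {x y z : Fin m} (hxy : x ≠ y) (hxz : x ≠ z) (hyz : y ≠ z)
    (hchar : ∀ I : Finset (Fin m), I ∈ K ↔
      (¬({x, y} : Finset (Fin m)) ⊆ I ∧ ¬({x, z} : Finset (Fin m)) ⊆ I)) :
    ∑ I ∈ Finset.univ.filter (· ∈ K), ((X : Polynomial ℤ) ^ (m - I.card) - X ^ I.card)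
    = (X - 1) * ((1 + X) ^ (m - 1) + 1 * X * (1 + X) ^ (m - 3)) := by
  have hQ : ∀ I : Finset (Fin m), I ∈ K ↔
      (fun W => ¬({x, y} : Finset (Fin m)) ⊆ W ∧ ¬({x, z} : Finset (Fin m)) ⊆ W)
        (I ∩ {x, y, z}) := by
    intro I
    rw [hchar I]
    simp [Finset.subset_inter_iff, Finset.insert_subset_iff]
  rw [master {x, y, z} (fun W => ¬({x, y} : Finset (Fin m)) ⊆ W ∧ ¬({x, z} : Finset (Fin m)) ⊆ W) hQ, psum3 hxy hxz hyz]
  norm_num [Finset.insert_subset_iff, Finset.card_insert_of_notMem,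
    hxy, hxy.symm, hxz, hxz.symm, hyz, hyz.symm, -Finset.subset_singleton_iff]
  obtain ⟨r, rfl⟩ : ∃ r, m = r + 3 := ⟨m - 3, by omega⟩
  rw [show r + 3 - 3 = r by omega, show r + 3 - 1 = r + 2 by omega]
  ring

lemma shape_C3 (hm : 3 ≤ m) {x y z : Fin m} (hxy : x ≠ y) (hxz : x ≠ z) (hyz : y ≠ z)
    (hchar : ∀ I : Finset (Fin m), I ∈ K ↔
      (¬({x, y} : Finset (Fin m)) ⊆ I ∧ ¬({x, z} : Finset (Fin m)) ⊆ I ∧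
        ¬({y, z} : Finset (Fin m)) ⊆ I)) :
    ∑ I ∈ Finset.univ.filter (· ∈ K), ((X : Polynomial ℤ) ^ (m - I.card) - X ^ I.card)
    = (X - 1) * ((1 + X) ^ (m - 1) + 2 * X * (1 + X) ^ (m - 3)) := by
  have hQ : ∀ I : Finset (Fin m), I ∈ K ↔
      (fun W => ¬({x, y} : Finset (Fin m)) ⊆ W ∧ ¬({x, z} : Finset (Fin m)) ⊆ W ∧
        ¬({y, z} : Finset (Fin m)) ⊆ W) (I ∩ {x, y, z}) := by
    intro I
    rw [hchar I]
    simp [Finset.subset_inter_iff, Finset.insert_subset_iff]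
  rw [master {x, y, z} (fun W => ¬({x, y} : Finset (Fin m)) ⊆ W ∧ ¬({x, z} : Finset (Fin m)) ⊆ W ∧ ¬({y, z} : Finset (Fin m)) ⊆ W) hQ, psum3 hxy hxz hyz]
  norm_num [Finset.insert_subset_iff, Finset.card_insert_of_notMem,
    hxy, hxy.symm, hxz, hxz.symm, hyz, hyz.symm, -Finset.subset_singleton_iff]
  obtain ⟨r, rfl⟩ : ∃ r, m = r + 3 := ⟨m - 3, by omega⟩
  rw [show r + 3 - 3 = r by omega, show r + 3 - 1 = r + 2 by omega]
  ring

lemma shape_2K2 {a b c d : Fin m} (hab : a ≠ b) (hac : a ≠ c) (had : a ≠ d)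
    (hbc : b ≠ c) (hbd : b ≠ d) (hcd : c ≠ d)
    (hchar : ∀ I : Finset (Fin m), I ∈ K ↔
      (¬({a, b} : Finset (Fin m)) ⊆ I ∧ ¬({c, d} : Finset (Fin m)) ⊆ I)) :
    ∑ I ∈ Finset.univ.filter (· ∈ K), ((X : Polynomial ℤ) ^ (m - I.card) - X ^ I.card)
    = (X - 1) * ((1 + X) ^ (m - 1) + 2 * X * (1 + X) ^ (m - 3)) := by
  have hm4 : 4 ≤ m := card4_le hab hac had hbc hbd hcd
  have hQ : ∀ I : Finset (Fin m), I ∈ K ↔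
      (fun W => ¬({a, b} : Finset (Fin m)) ⊆ W ∧ ¬({c, d} : Finset (Fin m)) ⊆ W)
        (I ∩ {a, b, c, d}) := by
    intro I
    rw [hchar I]
    simp [Finset.subset_inter_iff, Finset.insert_subset_iff]
  rw [master {a, b, c, d} (fun W => ¬({a, b} : Finset (Fin m)) ⊆ W ∧ ¬({c, d} : Finset (Fin m)) ⊆ W) hQ, psum4 hab hac had hbc hbd hcd]
  norm_num [Finset.insert_subset_iff, Finset.card_insert_of_notMem,
    hab, hab.symm, hac, hac.symm, had, had.symm, hbc, hbc.symm, hbd, hbd.symm, hcd, hcd.symm, -Finset.subset_singleton_iff]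
  obtain ⟨r, rfl⟩ : ∃ r, m = r + 4 := ⟨m - 4, by omega⟩
  rw [show r + 4 - 4 = r by omega, show r + 4 - 1 = r + 3 by omega,
    show r + 4 - 3 = r + 1 by omega]
  ring

lemma shape_P4 {x y z w : Fin m} (hxy : x ≠ y) (hxz : x ≠ z) (hxw : x ≠ w)
    (hyz : y ≠ z) (hyw : y ≠ w) (hzw : z ≠ w)
    (hchar : ∀ I : Finset (Fin m), I ∈ K ↔
      (¬({x, y} : Finset (Fin m)) ⊆ I ∧ ¬({x, z} : Finset (Fin m)) ⊆ I ∧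
        ¬({y, w} : Finset (Fin m)) ⊆ I)) :
    ∑ I ∈ Finset.univ.filter (· ∈ K), ((X : Polynomial ℤ) ^ (m - I.card) - X ^ I.card)
    = (X - 1) * ((1 + X) ^ (m - 1) + 2 * X * (1 + X) ^ (m - 3)) := by
  have hm4 : 4 ≤ m := card4_le hxy hxz hxw hyz hyw hzw
  have hQ : ∀ I : Finset (Fin m), I ∈ K ↔
      (fun W => ¬({x, y} : Finset (Fin m)) ⊆ W ∧ ¬({x, z} : Finset (Fin m)) ⊆ W ∧
        ¬({y, w} : Finset (Fin m)) ⊆ W) (I ∩ {x, y, z, w}) := by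
    intro I
    rw [hchar I]
    simp [Finset.subset_inter_iff, Finset.insert_subset_iff]
  rw [master {x, y, z, w} (fun W => ¬({x, y} : Finset (Fin m)) ⊆ W ∧ ¬({x, z} : Finset (Fin m)) ⊆ W ∧ ¬({y, w} : Finset (Fin m)) ⊆ W) hQ, psum4 hxy hxz hxw hyz hyw hzw]
  norm_num [Finset.insert_subset_iff, Finset.card_insert_of_notMem,
    hxy, hxy.symm, hxz, hxz.symm, hxw, hxw.symm, hyz, hyz.symm, hyw, hyw.symm, hzw, hzw.symm, -Finset.subset_singleton_iff]
  obtain ⟨r, rfl⟩ : ∃ r, m = r + 4 := ⟨m - 4, by omega⟩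
  rw [show r + 4 - 4 = r by omega, show r + 4 - 1 = r + 3 by omega,
    show r + 4 - 3 = r + 1 by omega]
  ring

lemma shape_C4 {x y z w : Fin m} (hxy : x ≠ y) (hxz : x ≠ z) (hxw : x ≠ w)
    (hyz : y ≠ z) (hyw : y ≠ w) (hzw : z ≠ w)
    (hchar : ∀ I : Finset (Fin m), I ∈ K ↔
      (¬({x, y} : Finset (Fin m)) ⊆ I ∧ ¬({x, z} : Finset (Fin m)) ⊆ I ∧
        ¬({y, w} : Finset (Fin m)) ⊆ I ∧ ¬({z, w} : Finset (Fin m)) ⊆ I)) :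
    ∑ I ∈ Finset.univ.filter (· ∈ K), ((X : Polynomial ℤ) ^ (m - I.card) - X ^ I.card)
    = (X - 1) * ((1 + X) ^ (m - 1) + 2 * X * (1 + X) ^ (m - 3)) := by
  have hm4 : 4 ≤ m := card4_le hxy hxz hxw hyz hyw hzw
  have hQ : ∀ I : Finset (Fin m), I ∈ K ↔
      (fun W => ¬({x, y} : Finset (Fin m)) ⊆ W ∧ ¬({x, z} : Finset (Fin m)) ⊆ W ∧
        ¬({y, w} : Finset (Fin m)) ⊆ W ∧ ¬({z, w} : Finset (Fin m)) ⊆ W)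
        (I ∩ {x, y, z, w}) := by
    intro I
    rw [hchar I]
    simp [Finset.subset_inter_iff, Finset.insert_subset_iff]
  rw [master {x, y, z, w} (fun W => ¬({x, y} : Finset (Fin m)) ⊆ W ∧ ¬({x, z} : Finset (Fin m)) ⊆ W ∧ ¬({y, w} : Finset (Fin m)) ⊆ W ∧ ¬({z, w} : Finset (Fin m)) ⊆ W) hQ, psum4 hxy hxz hxw hyz hyw hzw]
  norm_num [Finset.insert_subset_iff, Finset.card_insert_of_notMem,
    hxy, hxy.symm, hxz, hxz.symm, hxw, hxw.symm, hyz, hyz.symm, hyw, hyw.symm, hzw, hzw.symm, -Finset.subset_singleton_iff]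
  obtain ⟨r, rfl⟩ : ∃ r, m = r + 4 := ⟨m - 4, by omega⟩
  rw [show r + 4 - 4 = r by omega, show r + 4 - 1 = r + 3 by omega,
    show r + 4 - 3 = r + 1 by omega]
  ring

lemma pair_subset {u v : Fin m} {I : Finset (Fin m)} (hu : u ∈ I) (hv : v ∈ I) :
    ({u, v} : Finset (Fin m)) ⊆ I := by
  rw [Finset.insert_subset_iff, Finset.singleton_subset_iff]
  exact ⟨hu, hv⟩

lemma gamma_exists (hm : 3 ≤ m) (hK : IsComplex K) (hKne : K ≠ Set.univ)
    (hflag : IsFlag (bier K)) :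
    ∃ γ : Polynomial ℤ, (γ = 0 ∨ γ = 1 ∨ γ = 2) ∧
      ∑ I ∈ Finset.univ.filter (· ∈ K), ((X : Polynomial ℤ) ^ (m - I.card) - X ^ I.card)
      = (X - 1) * ((1 + X) ^ (m - 1) + γ * X * (1 + X) ^ (m - 3)) := by
  have rep := mem_iff_clique hK hKne hflag
  set B : Finset (Fin m) := Finset.univ.filter (fun x => ({x} : Finset (Fin m)) ∉ K) with hB
  obtain ⟨S₀, hS₀, -⟩ := facet_exists hK hK.1
  have hBsub : B ⊆ S₀ᶜ := by
    intro x hx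
    rw [Finset.mem_compl]
    exact bad_not_mem hK hS₀.1 (Finset.mem_filter.mp hx).2
  have hB2 : B.card ≤ 2 := (Finset.card_le_card hBsub).trans (facet_compl_card hK hflag hS₀)
  have hBmem : ∀ x, x ∈ B ↔ ({x} : Finset (Fin m)) ∉ K := by
    intro x; rw [hB, Finset.mem_filter]; simp
  have h012 : B.card = 0 ∨ B.card = 1 ∨ B.card = 2 := by omega
  rcases h012 with hBc | hBc | hBc
  · -- no bad vertices
    have hgood : ∀ x, ({x} : Finset (Fin m)) ∈ K := by
      intro x
      by_contra h
      have : x ∈ B := (hBmem x).mpr h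
      rw [Finset.card_eq_zero.mp hBc] at this
      exact absurd this (Finset.notMem_empty x)
    -- find an edge
    obtain ⟨I₀, hI₀⟩ := Set.ne_univ_iff_exists_notMem K |>.mp hKne
    obtain ⟨τ, -, hτ⟩ := exists_min_nonface hK I₀ hI₀
    have hcard := K_flag hK hKne hflag τ hτ
    have hadjab : ∃ a b, NPadj K a b := by
      have h012' : τ.card = 0 ∨ τ.card = 1 ∨ τ.card = 2 := by omega
      rcases h012' with h | h | h
      · exact absurd (Finset.card_eq_zero.mp h ▸ hK.1) hτ.1
      · obtain ⟨x, rfl⟩ := Finset.card_eq_one.mp h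
        exact absurd (hgood x) hτ.1
      · obtain ⟨a, b, hab, rfl⟩ := Finset.card_eq_two.mp h
        exact ⟨a, b, hab, hgood a, hgood b, hτ.1⟩
    obtain ⟨a, b, hadj⟩ := hadjab
    have hdeg : ∀ x y₁ y₂ y₃, NPadj K x y₁ → NPadj K x y₂ → NPadj K x y₃ →
        y₁ ≠ y₂ → y₁ ≠ y₃ → y₂ ≠ y₃ → False := by
      intro x y₁ y₂ y₃ h1 h2 h3 h12 h13 h23
      obtain ⟨S, hS, hsub⟩ := facet_exists hK h1.2.1
      have hxS : x ∈ S := hsub (Finset.mem_singleton_self x)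
      exact facet_three hK hflag hS (adj_notMem hK hS.1 h1 hxS)
        (adj_notMem hK hS.1 h2 hxS) (adj_notMem hK hS.1 h3 hxS) h12 h13 h23
    by_cases hdeg2 : ∃ x y z, NPadj K x y ∧ NPadj K x z ∧ y ≠ z
    · obtain ⟨x, y, z, hxy, hxz, hyz⟩ := hdeg2
      have hmeets : ∀ u v, NPadj K u v → u ≠ x → u ≠ y → u ≠ z →
          v ≠ x → v ≠ y → v ≠ z → False := by
        intro u v huv hux huy huz hvx hvy hvz
        obtain ⟨S, hS, hsub⟩ := facet_exists hK hxy.2.1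
        have hxS : x ∈ S := hsub (Finset.mem_singleton_self x)
        have hyS := adj_notMem hK hS.1 hxy hxS
        have hzS := adj_notMem hK hS.1 hxz hxS
        rcases adj_not_both hK hS.1 huv with h | h
        · exact facet_three hK hflag hS hyS hzS h hyz huy.symm huz.symm
        · exact facet_three hK hflag hS hyS hzS h hyz hvy.symm hvz.symm
      by_cases htri : NPadj K y z
      · -- C3
        have hedge : ∀ u v, NPadj K u v →
            (({u, v} : Finset (Fin m)) = {x, y} ∨ ({u, v} : Finset (Fin m)) = {x, z} ∨
              ({u, v} : Finset (Fin m)) = {y, z}) := by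
          have main : ∀ u' v', NPadj K u' v' → (u' = x ∨ u' = y ∨ u' = z) →
              (({u', v'} : Finset (Fin m)) = {x, y} ∨ ({u', v'} : Finset (Fin m)) = {x, z} ∨
                ({u', v'} : Finset (Fin m)) = {y, z}) := by
            intro u' v' h hu'
            rcases hu' with rfl | rfl | rfl
            · by_cases h1 : v' = y
              · exact Or.inl (by rw [h1])
              by_cases h2 : v' = z
              · exact Or.inr (Or.inl (by rw [h2]))
              exact (hdeg u' y z v' hxy hxz h hyz
                (fun hh => h1 hh.symm) (fun hh => h2 hh.symm)).elim
            · by_cases h1 : v' = x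
              · exact Or.inl (by rw [h1, Finset.pair_comm])
              by_cases h2 : v' = z
              · exact Or.inr (Or.inr (by rw [h2]))
              exact (hdeg u' x z v' hxy.symm htri h hxz.1
                (fun hh => h1 hh.symm) (fun hh => h2 hh.symm)).elim
            · by_cases h1 : v' = x
              · exact Or.inr (Or.inl (by rw [h1, Finset.pair_comm]))
              by_cases h2 : v' = y
              · exact Or.inr (Or.inr (by rw [h2, Finset.pair_comm]))
              exact (hdeg u' x y v' hxz.symm htri.symm h hxy.1
                (fun hh => h1 hh.symm) (fun hh => h2 hh.symm)).elim
          intro u v huv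
          by_cases hu' : u = x ∨ u = y ∨ u = z
          · exact main u v huv hu'
          push_neg at hu'
          by_cases hv' : v = x ∨ v = y ∨ v = z
          · rcases main v u huv.symm hv' with h | h | h
            · exact Or.inl (by rw [Finset.pair_comm, h])
            · exact Or.inr (Or.inl (by rw [Finset.pair_comm, h]))
            · exact Or.inr (Or.inr (by rw [Finset.pair_comm, h]))
          push_neg at hv'
          exact (hmeets u v huv hu'.1 hu'.2.1 hu'.2.2 hv'.1 hv'.2.1 hv'.2.2).elim
        have hchar : ∀ I : Finset (Fin m), I ∈ K ↔
            (¬({x, y} : Finset (Fin m)) ⊆ I ∧ ¬({x, z} : Finset (Fin m)) ⊆ I ∧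
              ¬({y, z} : Finset (Fin m)) ⊆ I) := by
          intro I
          constructor
          · intro hI
            exact ⟨fun hsub => hxy.2.2.2 (hK.2 I hI _ hsub),
              fun hsub => hxz.2.2.2 (hK.2 I hI _ hsub),
              fun hsub => htri.2.2.2 (hK.2 I hI _ hsub)⟩
          · rintro ⟨h1, h2', h3⟩
            rw [rep I]
            refine ⟨fun u _ => hgood u, ?_⟩
            intro u hu v hv huv
            by_contra h
            rcases hedge u v ⟨huv, hgood u, hgood v, h⟩ with he | he | he
            · exact h1 (he ▸ pair_subset hu hv)
            · exact h2' (he ▸ pair_subset hu hv)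
            · exact h3 (he ▸ pair_subset hu hv)
        exact ⟨2, Or.inr (Or.inr rfl), shape_C3 hm hxy.1 hxz.1 hyz hchar⟩
      · have hyzK : ({y, z} : Finset (Fin m)) ∈ K := by
          by_contra h
          exact htri ⟨hyz, hgood y, hgood z, h⟩
        by_cases hw : ∃ w, NPadj K y w ∧ w ≠ x
        · obtain ⟨w, hyw, hwx⟩ := hw
          have hwy : w ≠ y := hyw.1.symm
          have hwz : w ≠ z := by
            rintro rfl
            exact htri hyw
          by_cases hv : ∃ v, NPadj K z v ∧ v ≠ x
          · obtain ⟨v, hzv, hvx⟩ := hv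
            have hvz : v ≠ z := hzv.1.symm
            have hvy : v ≠ y := by
              rintro rfl
              exact htri hzv.symm
            by_cases hwv : w = v
            · subst hwv
              -- now w is named v? keep generic: edges xy,xz,yw(=v),zv
              have hedge : ∀ u u', NPadj K u u' →
                  (({u, u'} : Finset (Fin m)) = {x, y} ∨ ({u, u'} : Finset (Fin m)) = {x, z} ∨
                    ({u, u'} : Finset (Fin m)) = {y, w} ∨ ({u, u'} : Finset (Fin m)) = {z, w}) := by
                have main : ∀ u u', NPadj K u u' → (u = x ∨ u = y ∨ u = z) →
                    (({u, u'} : Finset (Fin m)) = {x, y} ∨ ({u, u'} : Finset (Fin m)) = {x, z} ∨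
                      ({u, u'} : Finset (Fin m)) = {y, w} ∨
                        ({u, u'} : Finset (Fin m)) = {z, w}) := by
                  intro u u' h hu
                  rcases hu with rfl | rfl | rfl
                  · by_cases h1 : u' = y
                    · exact Or.inl (by rw [h1])
                    by_cases h2 : u' = z
                    · exact Or.inr (Or.inl (by rw [h2]))
                    exact (hdeg u y z u' hxy hxz h hyz
                      (fun hh => h1 hh.symm) (fun hh => h2 hh.symm)).elim
                  · by_cases h1 : u' = x
                    · exact Or.inl (by rw [h1, Finset.pair_comm])
                    by_cases h2 : u' = w
                    · exact Or.inr (Or.inr (Or.inl (by rw [h2])))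
                    exact (hdeg u x w u' hxy.symm hyw h hwx.symm
                      (fun hh => h1 hh.symm) (fun hh => h2 hh.symm)).elim
                  · by_cases h1 : u' = x
                    · exact Or.inr (Or.inl (by rw [h1, Finset.pair_comm]))
                    by_cases h2 : u' = w
                    · exact Or.inr (Or.inr (Or.inr (by rw [h2])))
                    exact (hdeg u x w u' hxz.symm hzv h hwx.symm
                      (fun hh => h1 hh.symm) (fun hh => h2 hh.symm)).elim
                intro u u' huv
                by_cases hu' : u = x ∨ u = y ∨ u = z
                · exact main u u' huv hu'
                push_neg at hu'
                by_cases hv' : u' = x ∨ u' = y ∨ u' = z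
                · rcases main u' u huv.symm hv' with h | h | h | h
                  · exact Or.inl (by rw [Finset.pair_comm, h])
                  · exact Or.inr (Or.inl (by rw [Finset.pair_comm, h]))
                  · exact Or.inr (Or.inr (Or.inl (by rw [Finset.pair_comm, h])))
                  · exact Or.inr (Or.inr (Or.inr (by rw [Finset.pair_comm, h])))
                push_neg at hv'
                exact (hmeets u u' huv hu'.1 hu'.2.1 hu'.2.2 hv'.1 hv'.2.1 hv'.2.2).elim
              have hchar : ∀ I : Finset (Fin m), I ∈ K ↔
                  (¬({x, y} : Finset (Fin m)) ⊆ I ∧ ¬({x, z} : Finset (Fin m)) ⊆ I ∧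
                    ¬({y, w} : Finset (Fin m)) ⊆ I ∧ ¬({z, w} : Finset (Fin m)) ⊆ I) := by
                intro I
                constructor
                · intro hI
                  exact ⟨fun hsub => hxy.2.2.2 (hK.2 I hI _ hsub),
                    fun hsub => hxz.2.2.2 (hK.2 I hI _ hsub),
                    fun hsub => hyw.2.2.2 (hK.2 I hI _ hsub),
                    fun hsub => hzv.2.2.2 (hK.2 I hI _ hsub)⟩
                · rintro ⟨h1, h2', h3, h4⟩
                  rw [rep I]
                  refine ⟨fun u _ => hgood u, ?_⟩
                  intro u hu v' hv'' huv
                  by_contra h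
                  rcases hedge u v' ⟨huv, hgood u, hgood v', h⟩ with he | he | he | he
                  · exact h1 (he ▸ pair_subset hu hv'')
                  · exact h2' (he ▸ pair_subset hu hv'')
                  · exact h3 (he ▸ pair_subset hu hv'')
                  · exact h4 (he ▸ pair_subset hu hv'')
              exact ⟨2, Or.inr (Or.inr rfl), shape_C4 hxy.1 hxz.1 hwx.symm hyz
                hwy.symm hwz.symm hchar⟩
            · -- P5 contradiction
              obtain ⟨S, hS, hsub⟩ := facet_exists hK hyzK
              have hyS : y ∈ S := hsub (by simp)
              have hzS : z ∈ S := hsub (by simp)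
              exact (facet_three hK hflag hS
                (adj_notMem hK hS.1 hxy.symm hyS)
                (adj_notMem hK hS.1 hyw hyS)
                (adj_notMem hK hS.1 hzv hzS)
                hwx.symm hvx.symm hwv).elim
          · -- P4 : edges xy, xz, yw
            push_neg at hv
            have hedge : ∀ u u', NPadj K u u' →
                (({u, u'} : Finset (Fin m)) = {x, y} ∨ ({u, u'} : Finset (Fin m)) = {x, z} ∨
                  ({u, u'} : Finset (Fin m)) = {y, w}) := by
              have main : ∀ u u', NPadj K u u' → (u = x ∨ u = y ∨ u = z) →
                  (({u, u'} : Finset (Fin m)) = {x, y} ∨ ({u, u'} : Finset (Fin m)) = {x, z} ∨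
                    ({u, u'} : Finset (Fin m)) = {y, w}) := by
                intro u u' h hu
                rcases hu with rfl | rfl | rfl
                · by_cases h1 : u' = y
                  · exact Or.inl (by rw [h1])
                  by_cases h2 : u' = z
                  · exact Or.inr (Or.inl (by rw [h2]))
                  exact (hdeg u y z u' hxy hxz h hyz
                    (fun hh => h1 hh.symm) (fun hh => h2 hh.symm)).elim
                · by_cases h1 : u' = x
                  · exact Or.inl (by rw [h1, Finset.pair_comm])
                  by_cases h2 : u' = w
                  · exact Or.inr (Or.inr (by rw [h2]))
                  exact (hdeg u x w u' hxy.symm hyw h hwx.symm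
                    (fun hh => h1 hh.symm) (fun hh => h2 hh.symm)).elim
                · have := hv u' h
                  exact Or.inr (Or.inl (by rw [this, Finset.pair_comm]))
              intro u u' huv
              by_cases hu' : u = x ∨ u = y ∨ u = z
              · exact main u u' huv hu'
              push_neg at hu'
              by_cases hv' : u' = x ∨ u' = y ∨ u' = z
              · rcases main u' u huv.symm hv' with h | h | h
                · exact Or.inl (by rw [Finset.pair_comm, h])
                · exact Or.inr (Or.inl (by rw [Finset.pair_comm, h]))
                · exact Or.inr (Or.inr (by rw [Finset.pair_comm, h]))
              push_neg at hv'
              exact (hmeets u u' huv hu'.1 hu'.2.1 hu'.2.2 hv'.1 hv'.2.1 hv'.2.2).elim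
            have hchar : ∀ I : Finset (Fin m), I ∈ K ↔
                (¬({x, y} : Finset (Fin m)) ⊆ I ∧ ¬({x, z} : Finset (Fin m)) ⊆ I ∧
                  ¬({y, w} : Finset (Fin m)) ⊆ I) := by
              intro I
              constructor
              · intro hI
                exact ⟨fun hsub => hxy.2.2.2 (hK.2 I hI _ hsub),
                  fun hsub => hxz.2.2.2 (hK.2 I hI _ hsub),
                  fun hsub => hyw.2.2.2 (hK.2 I hI _ hsub)⟩
              · rintro ⟨h1, h2', h3⟩
                rw [rep I]
                refine ⟨fun u _ => hgood u, ?_⟩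
                intro u hu v' hv'' huv
                by_contra h
                rcases hedge u v' ⟨huv, hgood u, hgood v', h⟩ with he | he | he
                · exact h1 (he ▸ pair_subset hu hv'')
                · exact h2' (he ▸ pair_subset hu hv'')
                · exact h3 (he ▸ pair_subset hu hv'')
            exact ⟨2, Or.inr (Or.inr rfl), shape_P4 hxy.1 hxz.1 hwx.symm hyz
              hwy.symm hwz.symm hchar⟩
        · by_cases hv : ∃ v, NPadj K z v ∧ v ≠ x
          · -- P4 mirrored : edges xz, xy, zv
            push_neg at hw
            obtain ⟨v, hzv, hvx⟩ := hv
            have hvz : v ≠ z := hzv.1.symm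
            have hvy : v ≠ y := by
              rintro rfl
              exact htri hzv.symm
            have hedge : ∀ u u', NPadj K u u' →
                (({u, u'} : Finset (Fin m)) = {x, z} ∨ ({u, u'} : Finset (Fin m)) = {x, y} ∨
                  ({u, u'} : Finset (Fin m)) = {z, v}) := by
              have main : ∀ u u', NPadj K u u' → (u = x ∨ u = y ∨ u = z) →
                  (({u, u'} : Finset (Fin m)) = {x, z} ∨ ({u, u'} : Finset (Fin m)) = {x, y} ∨
                    ({u, u'} : Finset (Fin m)) = {z, v}) := by
                intro u u' h hu
                rcases hu with rfl | rfl | rfl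
                · by_cases h1 : u' = y
                  · exact Or.inr (Or.inl (by rw [h1]))
                  by_cases h2 : u' = z
                  · exact Or.inl (by rw [h2])
                  exact (hdeg u y z u' hxy hxz h hyz
                    (fun hh => h1 hh.symm) (fun hh => h2 hh.symm)).elim
                · have := hw u' h
                  exact Or.inr (Or.inl (by rw [this, Finset.pair_comm]))
                · by_cases h1 : u' = x
                  · exact Or.inl (by rw [h1, Finset.pair_comm])
                  by_cases h2 : u' = v
                  · exact Or.inr (Or.inr (by rw [h2]))
                  exact (hdeg u x v u' hxz.symm hzv h hvx.symm
                    (fun hh => h1 hh.symm) (fun hh => h2 hh.symm)).elim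
              intro u u' huv
              by_cases hu' : u = x ∨ u = y ∨ u = z
              · exact main u u' huv hu'
              push_neg at hu'
              by_cases hv' : u' = x ∨ u' = y ∨ u' = z
              · rcases main u' u huv.symm hv' with h | h | h
                · exact Or.inl (by rw [Finset.pair_comm, h])
                · exact Or.inr (Or.inl (by rw [Finset.pair_comm, h]))
                · exact Or.inr (Or.inr (by rw [Finset.pair_comm, h]))
              push_neg at hv'
              exact (hmeets u u' huv hu'.1 hu'.2.1 hu'.2.2 hv'.1 hv'.2.1 hv'.2.2).elim
            have hchar : ∀ I : Finset (Fin m), I ∈ K ↔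
                (¬({x, z} : Finset (Fin m)) ⊆ I ∧ ¬({x, y} : Finset (Fin m)) ⊆ I ∧
                  ¬({z, v} : Finset (Fin m)) ⊆ I) := by
              intro I
              constructor
              · intro hI
                exact ⟨fun hsub => hxz.2.2.2 (hK.2 I hI _ hsub),
                  fun hsub => hxy.2.2.2 (hK.2 I hI _ hsub),
                  fun hsub => hzv.2.2.2 (hK.2 I hI _ hsub)⟩
              · rintro ⟨h1, h2', h3⟩
                rw [rep I]
                refine ⟨fun u _ => hgood u, ?_⟩
                intro u hu v' hv'' huv
                by_contra h
                rcases hedge u v' ⟨huv, hgood u, hgood v', h⟩ with he | he | he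
                · exact h1 (he ▸ pair_subset hu hv'')
                · exact h2' (he ▸ pair_subset hu hv'')
                · exact h3 (he ▸ pair_subset hu hv'')
            exact ⟨2, Or.inr (Or.inr rfl), shape_P4 hxz.1 hxy.1 hvx.symm hyz.symm
              hvz.symm hvy.symm hchar⟩
          · -- P3 : edges xy, xz
            push_neg at hw
            push_neg at hv
            have hedge : ∀ u u', NPadj K u u' →
                (({u, u'} : Finset (Fin m)) = {x, y} ∨
                  ({u, u'} : Finset (Fin m)) = {x, z}) := by
              have main : ∀ u u', NPadj K u u' → (u = x ∨ u = y ∨ u = z) →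
                  (({u, u'} : Finset (Fin m)) = {x, y} ∨
                    ({u, u'} : Finset (Fin m)) = {x, z}) := by
                intro u u' h hu
                rcases hu with rfl | rfl | rfl
                · by_cases h1 : u' = y
                  · exact Or.inl (by rw [h1])
                  by_cases h2 : u' = z
                  · exact Or.inr (by rw [h2])
                  exact (hdeg u y z u' hxy hxz h hyz
                    (fun hh => h1 hh.symm) (fun hh => h2 hh.symm)).elim
                · have := hw u' h
                  exact Or.inl (by rw [this, Finset.pair_comm])
                · have := hv u' h
                  exact Or.inr (by rw [this, Finset.pair_comm])
              intro u u' huv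
              by_cases hu' : u = x ∨ u = y ∨ u = z
              · exact main u u' huv hu'
              push_neg at hu'
              by_cases hv' : u' = x ∨ u' = y ∨ u' = z
              · rcases main u' u huv.symm hv' with h | h
                · exact Or.inl (by rw [Finset.pair_comm, h])
                · exact Or.inr (by rw [Finset.pair_comm, h])
              push_neg at hv'
              exact (hmeets u u' huv hu'.1 hu'.2.1 hu'.2.2 hv'.1 hv'.2.1 hv'.2.2).elim
            have hchar : ∀ I : Finset (Fin m), I ∈ K ↔
                (¬({x, y} : Finset (Fin m)) ⊆ I ∧ ¬({x, z} : Finset (Fin m)) ⊆ I) := by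
              intro I
              constructor
              · intro hI
                exact ⟨fun hsub => hxy.2.2.2 (hK.2 I hI _ hsub),
                  fun hsub => hxz.2.2.2 (hK.2 I hI _ hsub)⟩
              · rintro ⟨h1, h2'⟩
                rw [rep I]
                refine ⟨fun u _ => hgood u, ?_⟩
                intro u hu v' hv'' huv
                by_contra h
                rcases hedge u v' ⟨huv, hgood u, hgood v', h⟩ with he | he
                · exact h1 (he ▸ pair_subset hu hv'')
                · exact h2' (he ▸ pair_subset hu hv'')
            exact ⟨1, Or.inr (Or.inl rfl), shape_P3 hm hxy.1 hxz.1 hyz hchar⟩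
    · push_neg at hdeg2
      have hmatch : ∀ x y z, NPadj K x y → NPadj K x z → y = z := hdeg2
      by_cases h2 : ∃ c d, NPadj K c d ∧ ({c, d} : Finset (Fin m)) ≠ {a, b}
      · obtain ⟨c, d, hcd, hne⟩ := h2
        have hca : c ≠ a := by
          rintro rfl
          exact hne (by rw [← hmatch c b d hadj hcd])
        have hcb : c ≠ b := by
          rintro rfl
          exact hne (by rw [hmatch c d a hcd hadj.symm, Finset.pair_comm])
        have hda : d ≠ a := by
          rintro rfl
          exact hne (by rw [hmatch d c b hcd.symm hadj, Finset.pair_comm])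
        have hdb : d ≠ b := by
          rintro rfl
          exact hne (by rw [hmatch d c a hcd.symm hadj.symm])
        have hthird : ∀ e f, NPadj K e f →
            (({e, f} : Finset (Fin m)) = {a, b} ∨ ({e, f} : Finset (Fin m)) = {c, d}) := by
          intro e f hef
          by_contra hcon
          push_neg at hcon
          obtain ⟨hne1, hne2⟩ := hcon
          have hea : e ≠ a := by
            rintro rfl; exact hne1 (by rw [hmatch e f b hef hadj])
          have heb : e ≠ b := by
            rintro rfl; exact hne1 (by rw [hmatch e f a hef hadj.symm, Finset.pair_comm])
          have hec : e ≠ c := by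
            rintro rfl; exact hne2 (by rw [hmatch e f d hef hcd])
          have hed : e ≠ d := by
            rintro rfl; exact hne2 (by rw [hmatch e f c hef hcd.symm, Finset.pair_comm])
          have hfa : f ≠ a := by
            rintro rfl; exact hne1 (by rw [hmatch f e b hef.symm hadj, Finset.pair_comm])
          have hfb : f ≠ b := by
            rintro rfl; exact hne1 (by rw [hmatch f e a hef.symm hadj.symm])
          have hfc : f ≠ c := by
            rintro rfl; exact hne2 (by rw [hmatch f e d hef.symm hcd, Finset.pair_comm])
          have hfd : f ≠ d := by
            rintro rfl; exact hne2 (by rw [hmatch f e c hef.symm hcd.symm])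
          obtain ⟨S, hS, -⟩ := facet_exists hK hK.1
          rcases adj_not_both hK hS.1 hadj with h1 | h1 <;>
            rcases adj_not_both hK hS.1 hcd with h2 | h2 <;>
              rcases adj_not_both hK hS.1 hef with h3 | h3
          · exact facet_three hK hflag hS h1 h2 h3 hca.symm hea.symm hec.symm
          · exact facet_three hK hflag hS h1 h2 h3 hca.symm hfa.symm hfc.symm
          · exact facet_three hK hflag hS h1 h2 h3 hda.symm hea.symm hed.symm
          · exact facet_three hK hflag hS h1 h2 h3 hda.symm hfa.symm hfd.symm
          · exact facet_three hK hflag hS h1 h2 h3 hcb.symm heb.symm hec.symm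
          · exact facet_three hK hflag hS h1 h2 h3 hcb.symm hfb.symm hfc.symm
          · exact facet_three hK hflag hS h1 h2 h3 hdb.symm heb.symm hed.symm
          · exact facet_three hK hflag hS h1 h2 h3 hdb.symm hfb.symm hfd.symm
        have hchar : ∀ I : Finset (Fin m), I ∈ K ↔
            (¬({a, b} : Finset (Fin m)) ⊆ I ∧ ¬({c, d} : Finset (Fin m)) ⊆ I) := by
          intro I
          constructor
          · intro hI
            exact ⟨fun hsub => hadj.2.2.2 (hK.2 I hI _ hsub),
              fun hsub => hcd.2.2.2 (hK.2 I hI _ hsub)⟩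
          · rintro ⟨h1, h2'⟩
            rw [rep I]
            refine ⟨fun u _ => hgood u, ?_⟩
            intro u hu v hv huv
            by_contra h
            rcases hthird u v ⟨huv, hgood u, hgood v, h⟩ with he | he
            · exact h1 (he ▸ pair_subset hu hv)
            · exact h2' (he ▸ pair_subset hu hv)
        exact ⟨2, Or.inr (Or.inr rfl), shape_2K2 hadj.1 hca.symm hda.symm
          hcb.symm hdb.symm hcd.1 hchar⟩
      · push_neg at h2
        have hchar : ∀ I : Finset (Fin m), I ∈ K ↔
            ¬({a, b} : Finset (Fin m)) ⊆ I := by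
          intro I
          constructor
          · intro hI hsub
            exact hadj.2.2.2 (hK.2 I hI _ hsub)
          · intro habI
            rw [rep I]
            refine ⟨fun u _ => hgood u, ?_⟩
            intro u hu v hv huv
            by_contra h
            have := h2 u v ⟨huv, hgood u, hgood v, h⟩
            exact habI (this ▸ pair_subset hu hv)
        exact ⟨0, Or.inl rfl, shape_K2 hm hadj.1 hchar⟩
  · -- B.card = 1
    obtain ⟨p, hBp⟩ := Finset.card_eq_one.mp hBc
    have hbadiff : ∀ x, ({x} : Finset (Fin m)) ∉ K ↔ x = p := by
      intro x; rw [← hBmem x, hBp]; simp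
    have hpS : ∀ {S : Finset (Fin m)}, S ∈ K → p ∉ S :=
      fun hS => bad_not_mem hK hS ((hbadiff p).mpr rfl)
    by_cases hE : ∃ x y, NPadj K x y
    · obtain ⟨a, b, hadj⟩ := hE
      have hpa : p ≠ a := fun h => ((hbadiff a).mpr h.symm) hadj.2.1
      have hpb : p ≠ b := fun h => ((hbadiff b).mpr h.symm) hadj.2.2.1
      have key : ∀ u v w', NPadj K u v → NPadj K u w' → v ≠ w' → False := by
        intro u v w' h1 h2 hvw
        obtain ⟨S, hS, hsub⟩ := facet_exists hK h1.2.1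
        have huS : u ∈ S := hsub (Finset.mem_singleton_self u)
        have hvS := adj_notMem hK hS.1 h1 huS
        have hwS := adj_notMem hK hS.1 h2 huS
        have hvp : v ≠ p := fun h => ((hbadiff v).mpr h) h1.2.2.1
        have hwp : w' ≠ p := fun h => ((hbadiff w').mpr h) h2.2.2.1
        exact facet_three hK hflag hS (hpS hS.1) hvS hwS hvp.symm hwp.symm hvw
      have huniq : ∀ x y, NPadj K x y → ({x, y} : Finset (Fin m)) = {a, b} := by
        intro x y hxy
        by_contra hne
        have hxp : x ≠ p := fun h => ((hbadiff x).mpr h) hxy.2.1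
        have hyp : y ≠ p := fun h => ((hbadiff y).mpr h) hxy.2.2.1
        by_cases hxa : x = a
        · have hyb : y = b := by
            by_contra hyb
            exact key a y b (hxa ▸ hxy) hadj hyb
          exact hne (by rw [hxa, hyb])
        by_cases hxb : x = b
        · have hya : y = a := by
            by_contra hya
            exact key b y a (hxb ▸ hxy) hadj.symm hya
          exact hne (by rw [hxb, hya, Finset.pair_comm])
        by_cases hya : y = a
        · have hxb' : x = b := by
            by_contra h
            exact key a x b (hya ▸ hxy.symm) hadj h
          exact absurd hxb' hxb
        by_cases hyb : y = b
        · have hxa' : x = a := by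
            by_contra h
            exact key b x a (hyb ▸ hxy.symm) hadj.symm h
          exact absurd hxa' hxa
        obtain ⟨S, hS, -⟩ := facet_exists hK hK.1
        rcases adj_not_both hK hS.1 hadj with h1 | h1 <;>
          rcases adj_not_both hK hS.1 hxy with h2 | h2
        · exact facet_three hK hflag hS (hpS hS.1) h1 h2 hpa hxp.symm
            (fun h => hxa h.symm)
        · exact facet_three hK hflag hS (hpS hS.1) h1 h2 hpa hyp.symm
            (fun h => hya h.symm)
        · exact facet_three hK hflag hS (hpS hS.1) h1 h2 hpb hxp.symm
            (fun h => hxb h.symm)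
        · exact facet_three hK hflag hS (hpS hS.1) h1 h2 hpb hyp.symm
            (fun h => hyb h.symm)
      have hchar : ∀ I : Finset (Fin m), I ∈ K ↔
          (p ∉ I ∧ ¬({a, b} : Finset (Fin m)) ⊆ I) := by
        intro I
        constructor
        · intro hI
          exact ⟨hpS hI, fun hsub => hadj.2.2.2 (hK.2 I hI _ hsub)⟩
        · rintro ⟨hpI, habI⟩
          rw [rep I]
          have hsing : ∀ u ∈ I, ({u} : Finset (Fin m)) ∈ K := by
            intro u hu
            by_contra h
            rw [(hbadiff u).mp h] at hu
            exact hpI hu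
          refine ⟨hsing, ?_⟩
          intro u hu v hv huv
          by_contra h
          have := huniq u v ⟨huv, hsing u hu, hsing v hv, h⟩
          exact habI (this ▸ pair_subset hu hv)
      exact ⟨1, Or.inr (Or.inl rfl), shape_B1 hm hpa hpb hadj.1 hchar⟩
    · have hchar : ∀ I : Finset (Fin m), I ∈ K ↔ p ∉ I := by
        intro I
        constructor
        · intro hI; exact hpS hI
        · intro hpI
          rw [rep I]
          have hsing : ∀ u ∈ I, ({u} : Finset (Fin m)) ∈ K := by
            intro u hu
            by_contra h
            rw [(hbadiff u).mp h] at hu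
            exact hpI hu
          refine ⟨hsing, ?_⟩
          intro u hu v hv huv
          by_contra h
          exact hE ⟨u, v, huv, hsing u hu, hsing v hv, h⟩
      exact ⟨0, Or.inl rfl, shape_B0 hm p hchar⟩
  · -- B.card = 2
    obtain ⟨p, q, hpq, hBpq⟩ := Finset.card_eq_two.mp hBc
    have hbadiff : ∀ x, ({x} : Finset (Fin m)) ∉ K ↔ (x = p ∨ x = q) := by
      intro x; rw [← hBmem x, hBpq]; simp
    have hnoadj : ∀ x y, ¬ NPadj K x y := by
      intro x y hadj
      obtain ⟨S, hS, -⟩ := facet_exists hK hK.1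
      have hpS : p ∉ S := bad_not_mem hK hS.1 ((hbadiff p).mpr (Or.inl rfl))
      have hqS : q ∉ S := bad_not_mem hK hS.1 ((hbadiff q).mpr (Or.inr rfl))
      have hxp : x ≠ p := fun h => ((hbadiff x).mpr (Or.inl h)) hadj.2.1
      have hxq : x ≠ q := fun h => ((hbadiff x).mpr (Or.inr h)) hadj.2.1
      have hyp' : y ≠ p := fun h => ((hbadiff y).mpr (Or.inl h)) hadj.2.2.1
      have hyq : y ≠ q := fun h => ((hbadiff y).mpr (Or.inr h)) hadj.2.2.1
      rcases adj_not_both hK hS.1 hadj with h | h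
      · exact facet_three hK hflag hS hpS hqS h hpq hxp.symm hxq.symm
      · exact facet_three hK hflag hS hpS hqS h hpq hyp'.symm hyq.symm
    have hchar : ∀ I : Finset (Fin m), I ∈ K ↔ (p ∉ I ∧ q ∉ I) := by
      intro I
      constructor
      · intro hI
        exact ⟨bad_not_mem hK hI ((hbadiff p).mpr (Or.inl rfl)),
          bad_not_mem hK hI ((hbadiff q).mpr (Or.inr rfl))⟩
      · rintro ⟨hp', hq'⟩
        rw [rep I]
        have hsing : ∀ u ∈ I, ({u} : Finset (Fin m)) ∈ K := by
          intro u hu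
          by_contra h
          rcases (hbadiff u).mp h with rfl | rfl
          exacts [hp' hu, hq' hu]
        refine ⟨hsing, ?_⟩
        intro u hu v hv huv
        by_contra h
        exact hnoadj u v ⟨huv, hsing u hu, hsing v hv, h⟩
    exact ⟨0, Or.inl rfl, shape_A hm hpq hchar⟩

lemma card_le_two_flag {s : ℕ} (hs : s ≤ 2) (L : Finset (Finset (Fin s))) :
    IsFlag (↑L : Set (Finset (Fin s))) := by
  intro σ _
  have := Finset.card_le_univ σ
  simp only [Finset.card_univ, Fintype.card_fin] at this
  omega

end Structure


open Polynomial in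
theorem nevo_petersen_for_flag_bier {m : ℕ} (hm : 3 ≤ m)
    (K : Set (Finset (Fin m))) (hK : IsComplex K) (hKne : K ≠ Set.univ)
    (hflag : IsFlag (bier K)) :
    ∃ (s : ℕ) (L : Finset (Finset (Fin s))),
      IsComplex (↑L : Set (Finset (Fin s))) ∧
      IsFlag (↑L : Set (Finset (Fin s))) ∧
      (∀ k : ℕ, (m - 1) / 2 < k → (L.filter (fun τ => τ.card = k)).card = 0) ∧
      (∑ j ∈ Finset.range m,
          ((Finset.univ.filter
            (fun σ : Finset (Fin m ⊕ Fin m) => σ ∈ bier K ∧ σ.card = j)).card :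
              Polynomial ℤ) * (X - 1) ^ (m - 1 - j))
        = ∑ k ∈ Finset.range ((m - 1) / 2 + 1),
          ((L.filter (fun τ => τ.card = k)).card : Polynomial ℤ) *
            X ^ k * (1 + X) ^ (m - 1 - 2 * k) := by
  obtain ⟨γ, hγ, hsum⟩ := gamma_exists hm hK hKne hflag
  have hXne : (X : Polynomial ℤ) - 1 ≠ 0 := by
    have := Polynomial.X_sub_C_ne_zero (1 : ℤ)
    rwa [Polynomial.C_1] at this
  have hmain : (∑ j ∈ Finset.range m,
      ((Finset.univ.filter
        (fun σ : Finset (Fin m ⊕ Fin m) => σ ∈ bier K ∧ σ.card = j)).card :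
          Polynomial ℤ) * (X - 1) ^ (m - 1 - j))
      = (1 + X) ^ (m - 1) + γ * X * (1 + X) ^ (m - 3) := by
    apply mul_right_cancel₀ hXne
    rw [counting hK, hsum]
    ring
  have hq1 : 1 ≤ (m - 1) / 2 := by omega
  rcases hγ with rfl | rfl | rfl
  · refine ⟨0, {∅}, ?_, card_le_two_flag (by omega) _, ?_, ?_⟩
    · constructor
      · simp
      · intro σ hσ τ hτ
        simp only [Finset.coe_singleton, Set.mem_singleton_iff] at hσ ⊢
        subst hσ
        exact Finset.subset_empty.mp hτ
    · intro k hk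
      rw [Finset.filter_singleton, if_neg (by simp; omega)]
      simp
    · rw [hmain]
      symm
      rw [Finset.sum_eq_single_of_mem 0 (by simp)]
      · rw [Finset.filter_singleton, if_pos (by simp)]
        simp
      · intro b _ hb
        rw [Finset.filter_singleton, if_neg (by simpa using (Ne.symm hb))]
        simp
  · refine ⟨1, {∅, {0}}, ?_, card_le_two_flag (by omega) _, ?_, ?_⟩
    · constructor
      · simp
      · intro σ hσ τ hτ
        simp only [Finset.coe_insert, Finset.coe_singleton, Set.mem_insert_iff,
          Set.mem_singleton_iff] at hσ ⊢
        rcases hσ with rfl | rfl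
        · exact Or.inl (Finset.subset_empty.mp hτ)
        · rcases Finset.subset_singleton_iff.mp hτ with h | h
          exacts [Or.inl h, Or.inr h]
    · intro k hk
      rw [Finset.card_eq_zero, Finset.filter_eq_empty_iff]
      intro τ hτ
      simp only [Finset.mem_insert, Finset.mem_singleton] at hτ
      rcases hτ with rfl | rfl <;> simp <;> omega
    · rw [hmain]
      symm
      have hzero : ∀ k ∈ Finset.range ((m - 1) / 2 + 1), k ∉ ({0, 1} : Finset ℕ) →
          ((({∅, {0}} : Finset (Finset (Fin 1))).filter (fun τ => τ.card = k)).card :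
            Polynomial ℤ) * X ^ k * (1 + X) ^ (m - 1 - 2 * k) = 0 := by
        intro k _ hk
        simp only [Finset.mem_insert, Finset.mem_singleton] at hk
        push_neg at hk
        have : (({∅, {0}} : Finset (Finset (Fin 1))).filter (fun τ => τ.card = k)).card = 0 := by
          rw [Finset.card_eq_zero, Finset.filter_eq_empty_iff]
          intro τ hτ
          simp only [Finset.mem_insert, Finset.mem_singleton] at hτ
          rcases hτ with rfl | rfl <;> simp <;> omega
        rw [this]
        simp
      rw [← Finset.sum_subset (by intro k hk; simp at hk; simp [Finset.mem_range]; omega) hzero]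
      rw [Finset.sum_insert (by simp), Finset.sum_singleton]
      have hc0 : (({∅, {0}} : Finset (Finset (Fin 1))).filter (fun τ => τ.card = 0)).card = 1 := by
        decide
      have hc1 : (({∅, {0}} : Finset (Finset (Fin 1))).filter (fun τ => τ.card = 1)).card = 1 := by
        decide
      rw [hc0, hc1, show m - 1 - 2 * 1 = m - 3 by omega]
      push_cast
      simp only [Nat.sub_zero]
      ring
  · refine ⟨2, {∅, {0}, {1}}, ?_, card_le_two_flag (by omega) _, ?_, ?_⟩
    · constructor
      · simp
      · intro σ hσ τ hτ
        simp only [Finset.coe_insert, Finset.coe_singleton, Set.mem_insert_iff,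
          Set.mem_singleton_iff] at hσ ⊢
        rcases hσ with rfl | rfl | rfl
        · exact Or.inl (Finset.subset_empty.mp hτ)
        · rcases Finset.subset_singleton_iff.mp hτ with h | h
          exacts [Or.inl h, Or.inr (Or.inl h)]
        · rcases Finset.subset_singleton_iff.mp hτ with h | h
          exacts [Or.inl h, Or.inr (Or.inr h)]
    · intro k hk
      rw [Finset.card_eq_zero, Finset.filter_eq_empty_iff]
      intro τ hτ
      simp only [Finset.mem_insert, Finset.mem_singleton] at hτ
      rcases hτ with rfl | rfl | rfl <;> simp <;> omega
    · rw [hmain]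
      symm
      have hzero : ∀ k ∈ Finset.range ((m - 1) / 2 + 1), k ∉ ({0, 1} : Finset ℕ) →
          ((({∅, {0}, {1}} : Finset (Finset (Fin 2))).filter (fun τ => τ.card = k)).card :
            Polynomial ℤ) * X ^ k * (1 + X) ^ (m - 1 - 2 * k) = 0 := by
        intro k _ hk
        simp only [Finset.mem_insert, Finset.mem_singleton] at hk
        push_neg at hk
        have : (({∅, {0}, {1}} : Finset (Finset (Fin 2))).filter
            (fun τ => τ.card = k)).card = 0 := by
          rw [Finset.card_eq_zero, Finset.filter_eq_empty_iff]
          intro τ hτ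
          simp only [Finset.mem_insert, Finset.mem_singleton] at hτ
          rcases hτ with rfl | rfl | rfl <;> simp <;> omega
        rw [this]
        simp
      rw [← Finset.sum_subset (by intro k hk; simp at hk; simp [Finset.mem_range]; omega) hzero]
      rw [Finset.sum_insert (by simp), Finset.sum_singleton]
      have hc0 : (({∅, {0}, {1}} : Finset (Finset (Fin 2))).filter
          (fun τ => τ.card = 0)).card = 1 := by decide
      have hc1 : (({∅, {0}, {1}} : Finset (Finset (Fin 2))).filter
          (fun τ => τ.card = 1)).card = 2 := by decide
      rw [hc0, hc1, show m - 1 - 2 * 1 = m - 3 by omega]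
      push_cast
      simp only [Nat.sub_zero]
      ring
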